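/- Let θ be an infinite regular cardinal. Then there exists a map p : 𝔡_θ × θ → θ such that for every nonempty family ℬ of cofinal subsets of θ with |ℬ| < 𝔟_θ, there exists η < 𝔡_θ with p[{η} × B] = θ for all B ∈ ℬ. -/

import Mathlib

open Cardinal Ordinal Set

/-- `f` is a function from `θ` to `θ` (as a function on ordinals). -/
def intoFun (θ : Cardinal) (f : Ordinal → Ordinal) : Prop :=
  ∀ τ < θ.ord, f τ < θ.ord

/-- `f <* g`: eventual domination below `θ`. -/
def evLt (θ : Cardinal) (f g : Ordinal → Ordinal) : Prop :=
  ∃ ε < θ.ord, ∀ τ : Ordinal, ε ≤ τ → τ < θ.ord → f τ < g τ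

/-- The bounding number `𝔟_θ` of `(θ^θ, <*)`. -/
noncomputable def bNum (θ : Cardinal) : Cardinal :=
  sInf { c : Cardinal | ∃ o : Ordinal, o.card = c ∧
    ∃ F : Ordinal → Ordinal → Ordinal,
      (∀ i < o, intoFun θ (F i)) ∧
      ¬ ∃ g : Ordinal → Ordinal, intoFun θ g ∧ ∀ i < o, evLt θ (F i) g }

/-- The dominating number `𝔡_θ` of `(θ^θ, <*)`. -/
noncomputable def dNum (θ : Cardinal) : Cardinal :=
  sInf { c : Cardinal | ∃ o : Ordinal, o.card = c ∧
    ∃ F : Ordinal → Ordinal → Ordinal,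
      (∀ i < o, intoFun θ (F i)) ∧
      ∀ g : Ordinal → Ordinal, intoFun θ g → ∃ i < o, evLt θ g (F i) }

noncomputable def climb (f : Ordinal.{0} → Ordinal.{0}) (γ : Ordinal.{0}) : Ordinal.{0} :=
  limitRecOn γ 0 (fun _ ih => max (f ih) ih + 1) (fun o _ IH => Ordinal.bsup.{0,0} o IH)

theorem climb_zero (f : Ordinal → Ordinal) : climb f 0 = 0 :=
  limitRecOn_zero _ _ _

theorem climb_succ (f : Ordinal → Ordinal) (γ : Ordinal) :
    climb f (Order.succ γ) = max (f (climb f γ)) (climb f γ) + 1 :=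
  limitRecOn_succ _ _ _ _

theorem climb_limit (f : Ordinal → Ordinal) {γ : Ordinal} (h : Order.IsSuccLimit γ) :
    climb f γ = Ordinal.bsup γ (fun a _ => climb f a) :=
  limitRecOn_limit _ _ _ _ h

theorem climb_lt_succ (f : Ordinal → Ordinal) (γ : Ordinal) :
    climb f γ < climb f (Order.succ γ) := by
  rw [climb_succ, Ordinal.add_one_eq_succ]
  exact (le_max_right _ _).trans_lt (Order.lt_succ _)

theorem apply_climb_lt_succ (f : Ordinal → Ordinal) (γ : Ordinal) :
    f (climb f γ) < climb f (Order.succ γ) := by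
  rw [climb_succ, Ordinal.add_one_eq_succ]
  exact (le_max_left _ _).trans_lt (Order.lt_succ _)

theorem climb_strictMono (f : Ordinal → Ordinal) : StrictMono (climb f) := by
  intro a b hab
  induction b using Ordinal.induction with
  | h b IH =>
    rcases Ordinal.zero_or_succ_or_isSuccLimit b with h0 | ⟨c, rfl⟩ | hl
    · exact absurd hab (by simp [h0])
    · rcases (Order.lt_succ_iff.mp hab).lt_or_eq with h | h
      · exact (IH c (Order.lt_succ c) h).trans (climb_lt_succ f c)
      · rw [h]; exact climb_lt_succ f c
    · rw [climb_limit f hl]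
      calc climb f a < climb f (Order.succ a) := climb_lt_succ f a
        _ ≤ _ := Ordinal.le_bsup (fun a _ => climb f a) _ (hl.succ_lt hab)

theorem le_climb (f : Ordinal → Ordinal) (γ : Ordinal) : γ ≤ climb f γ :=
  (climb_strictMono f).le_apply

theorem climb_lt_ord {θ : Cardinal} (hθreg : θ.IsRegular) {f : Ordinal → Ordinal}
    (hf : intoFun θ f) : ∀ γ < θ.ord, climb f γ < θ.ord := by
  have hlim := Cardinal.isSuccLimit_ord hθreg.aleph0_le
  intro γ
  induction γ using Ordinal.limitRecOn with
  | zero => intro _; rw [climb_zero]; exact hlim.pos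
  | add_one o IH =>
    intro h
    rw [Ordinal.add_one_eq_succ] at h ⊢
    have ho : o < θ.ord := (Order.lt_succ o).trans h
    have h1 := IH ho
    have h2 := hf _ h1
    rw [climb_succ, Ordinal.add_one_eq_succ]
    exact hlim.succ_lt (max_lt h2 h1)
  | limit o ho IH =>
    intro h
    rw [climb_limit f ho]
    exact Cardinal.bsup_lt_ord_of_isRegular.{0,0} hθreg (Cardinal.lt_ord.mp h)
      (fun i hi => IH i hi (hi.trans h))

noncomputable def idx (f : Ordinal → Ordinal) (β : Ordinal) : Ordinal :=
  Ordinal.pred (sInf {δ | β < climb f δ})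

theorem idx_spec (f : Ordinal → Ordinal) (β : Ordinal) :
    idx f β ≤ β ∧ climb f (idx f β) ≤ β ∧ β < climb f (Order.succ (idx f β)) := by
  set S : Set Ordinal := {δ | β < climb f δ} with hS
  have hne : S.Nonempty := ⟨Order.succ β, (Order.lt_succ β).trans_le (le_climb f _)⟩
  have hmem : sInf S ∈ S := csInf_mem hne
  have hnotlt : ∀ a < sInf S, ¬ (β < climb f a) := fun a ha h => ha.not_ge (csInf_le' h)
  rcases Ordinal.zero_or_succ_or_isSuccLimit (sInf S) with h0 | ⟨a, ha⟩ | hl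
  · exfalso
    have h' : β < climb f 0 := h0 ▸ hmem
    rw [climb_zero] at h'
    exact (zero_le (a := β)).not_gt h'
  · have hidx : idx f β = a := by rw [idx, ← ha, Ordinal.pred_succ]
    have h1 : climb f a ≤ β := le_of_not_gt (hnotlt a (ha ▸ Order.lt_succ a))
    have h2 : β < climb f (Order.succ a) := by rw [ha]; exact hmem
    exact hidx ▸ ⟨(le_climb f a).trans h1, h1, h2⟩
  · exfalso
    have : climb f (sInf S) ≤ β := by
      rw [climb_limit f hl]
      exact Ordinal.bsup_le (fun i hi => le_of_not_gt (hnotlt i hi))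
    exact this.not_gt hmem

theorem idx_eq (f : Ordinal → Ordinal) {β γ : Ordinal}
    (h1 : climb f γ ≤ β) (h2 : β < climb f (Order.succ γ)) : idx f β = γ := by
  obtain ⟨_, hb1, hb2⟩ := idx_spec f β
  rcases lt_trichotomy (idx f β) γ with h | h | h
  · exact absurd (((climb_strictMono f).monotone (Order.succ_le_of_lt h)).trans h1) hb2.not_ge
  · exact h
  · exact absurd (((climb_strictMono f).monotone (Order.succ_le_of_lt h)).trans hb1) h2.not_ge

theorem aleph0_le_lift' {θ : Cardinal.{0}} (hθ : ℵ₀ ≤ θ) : ℵ₀ ≤ Cardinal.lift.{1,0} θ := by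
  rw [← Cardinal.lift_aleph0.{1,0}]
  exact Cardinal.lift_le.mpr hθ

theorem exists_pair (θ : Cardinal.{0}) (hθ : ℵ₀ ≤ θ) :
    ∃ v : Ordinal.{0} → Ordinal.{0}, (∀ γ < θ.ord, v γ < θ.ord) ∧
      ∀ τ < θ.ord, ∀ δ < θ.ord, ∃ γ < θ.ord, δ ≤ γ ∧ v γ = τ := by
  have hmk : #(↥(Iio θ.ord) × ↥(Iio θ.ord)) = #↥(Iio θ.ord) := by
    simp only [Cardinal.mk_prod, Cardinal.lift_id, Ordinal.mk_Iio_ordinal, Cardinal.card_ord]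
    exact Cardinal.mul_eq_self (aleph0_le_lift' hθ)
  obtain ⟨e⟩ := Cardinal.eq.mp hmk
  refine ⟨fun γ => if h : γ < θ.ord then ((e.symm ⟨γ, h⟩).2 : Ordinal) else 0, ?_, ?_⟩
  · intro γ h
    simp only [dif_pos h]
    exact (e.symm ⟨γ, h⟩).2.2
  · intro τ hτ δ hδ
    by_contra hcon
    push_neg at hcon
    have hj : ∀ x : ↥(Iio θ.ord), (e ⟨x, ⟨τ, hτ⟩⟩ : Ordinal) < δ := by
      intro x
      by_contra h'
      have hmem : ((e ⟨x, ⟨τ, hτ⟩⟩ : Ordinal)) < θ.ord := (e ⟨x, ⟨τ, hτ⟩⟩).2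
      refine hcon (e ⟨x, ⟨τ, hτ⟩⟩) hmem (le_of_not_gt h') ?_
      simp only [dif_pos hmem]
      have h5 : (⟨(e ⟨x, ⟨τ, hτ⟩⟩ : Ordinal), hmem⟩ : ↥(Iio θ.ord)) = e ⟨x, ⟨τ, hτ⟩⟩ := rfl
      rw [h5, Equiv.symm_apply_apply]
    have hinj : #↥(Iio θ.ord) ≤ #↥(Iio δ) := by
      refine Cardinal.mk_le_of_injective (f := fun x => ⟨(e ⟨x, ⟨τ, hτ⟩⟩ : Ordinal), hj x⟩) ?_
      intro x y hxy
      simp only [Subtype.mk.injEq] at hxy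
      have h4 := e.injective (Subtype.ext (Subtype.mk.inj hxy))
      exact congrArg Prod.fst h4
    rw [Ordinal.mk_Iio_ordinal, Ordinal.mk_Iio_ordinal, Cardinal.card_ord,
      Cardinal.lift_le] at hinj
    exact ((Cardinal.lt_ord.mp hδ).trans_le hinj).false

theorem exists_dominating (θ : Cardinal.{0}) (hθ : ℵ₀ ≤ θ) :
    ∃ F : Ordinal.{0} → Ordinal.{0} → Ordinal.{0},
      (∀ η < (dNum θ).ord, intoFun θ (F η)) ∧
      ∀ g, intoFun θ g → ∃ η < (dNum θ).ord, evLt θ g (F η) := by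
  have hlim := Cardinal.isSuccLimit_ord hθ
  -- the defining set of dNum is nonempty
  have hsne : (θ ^ θ : Cardinal) ∈ { c : Cardinal | ∃ o : Ordinal, o.card = c ∧
      ∃ F : Ordinal → Ordinal → Ordinal,
        (∀ i < o, intoFun θ (F i)) ∧
        ∀ g : Ordinal → Ordinal, intoFun θ g → ∃ i < o, evLt θ g (F i) } := by
    set o : Ordinal.{0} := (θ ^ θ : Cardinal).ord with ho
    have hmk : #↥(Iio o) = #(↥(Iio θ.ord) → ↥(Iio θ.ord)) := by
      rw [Ordinal.mk_Iio_ordinal, Cardinal.card_ord, ← Cardinal.power_def,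
        Ordinal.mk_Iio_ordinal, Cardinal.card_ord, Cardinal.lift_power]
    obtain ⟨e⟩ := Cardinal.eq.mp hmk
    refine ⟨o, Cardinal.card_ord _, fun i τ =>
      if h : i < o then (if h2 : τ < θ.ord then ((e ⟨i, h⟩ ⟨τ, h2⟩ : Ordinal)) else 0) else 0,
      ?_, ?_⟩
    · intro i hi τ hτ
      simp only [dif_pos hi, dif_pos hτ]
      exact (e ⟨i, hi⟩ ⟨τ, hτ⟩).2
    · intro g hg
      set G : ↥(Iio θ.ord) → ↥(Iio θ.ord) := fun τ =>
        ⟨g τ + 1, by rw [Ordinal.add_one_eq_succ]; exact hlim.succ_lt (hg τ τ.2)⟩ with hG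
      have hmem : ((e.symm G : Ordinal)) < o := (e.symm G).2
      refine ⟨(e.symm G : Ordinal), hmem, 0, hlim.pos, ?_⟩
      intro τ _ hτ
      simp only [dif_pos hmem, dif_pos hτ]
      have h5 : (⟨(e.symm G : Ordinal), hmem⟩ : ↥(Iio o)) = e.symm G := rfl
      rw [h5, e.apply_symm_apply, hG]
      exact (Order.lt_succ (g τ)).trans_eq (Ordinal.add_one_eq_succ _).symm
  -- dNum is attained
  have hd : dNum θ ∈ _ := csInf_mem ⟨_, hsne⟩
  obtain ⟨o, ho, F, hF1, hF2⟩ := hd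
  -- reindex along an equiv
  have hmk : #↥(Iio (dNum θ).ord) = #↥(Iio o) := by
    rw [Ordinal.mk_Iio_ordinal, Ordinal.mk_Iio_ordinal, Cardinal.card_ord, ho]
  obtain ⟨E⟩ := Cardinal.eq.mp hmk
  refine ⟨fun η => if h : η < (dNum θ).ord then F (E ⟨η, h⟩) else fun _ => 0, ?_, ?_⟩
  · intro η hη
    simp only [dif_pos hη]
    exact hF1 _ (E ⟨η, hη⟩).2
  · intro g hg
    obtain ⟨i, hi, hdom⟩ := hF2 g hg
    have hmem : ((E.symm ⟨i, hi⟩ : Ordinal)) < (dNum θ).ord := (E.symm ⟨i, hi⟩).2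
    refine ⟨(E.symm ⟨i, hi⟩ : Ordinal), hmem, ?_⟩
    simp only [dif_pos hmem]
    have h5 : (⟨(E.symm ⟨i, hi⟩ : Ordinal), hmem⟩ : ↥(Iio (dNum θ).ord)) = E.symm ⟨i, hi⟩ := rfl
    rw [h5, E.apply_symm_apply]
    exact hdom

theorem exists_bound (θ : Cardinal.{0}) (hθ : ℵ₀ ≤ θ) {α : Type 1}
    (G : α → Ordinal.{0} → Ordinal.{0}) (hG : ∀ a, intoFun θ (G a))
    (hcard : #α < Cardinal.lift.{1,0} (bNum θ)) :
    ∃ g, intoFun θ g ∧ ∀ a, evLt θ (G a) g := by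
  have hlim := Cardinal.isSuccLimit_ord hθ
  by_contra hcon
  obtain ⟨c, hc⟩ := Cardinal.mem_range_lift_of_le hcard.le
  have hclt : c < bNum θ := by
    rw [← hc] at hcard
    exact Cardinal.lift_lt.mp hcard
  have hmk : #↥(Iio c.ord) = #α := by rw [Ordinal.mk_Iio_ordinal, Cardinal.card_ord, hc]
  obtain ⟨E⟩ := Cardinal.eq.mp hmk
  have hmem : c ∈ { c : Cardinal | ∃ o : Ordinal, o.card = c ∧
      ∃ F : Ordinal → Ordinal → Ordinal,
        (∀ i < o, intoFun θ (F i)) ∧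
        ¬ ∃ g : Ordinal → Ordinal, intoFun θ g ∧ ∀ i < o, evLt θ (F i) g } := by
    refine ⟨c.ord, Cardinal.card_ord c,
      fun i => if h : i < c.ord then G (E ⟨i, h⟩) else fun _ => 0, ?_, ?_⟩
    · intro i hi
      simp only [dif_pos hi]
      exact hG _
    · rintro ⟨g, hg, hdom⟩
      refine hcon ⟨g, hg, fun a => ?_⟩
      have hmem2 : ((E.symm a : Ordinal)) < c.ord := (E.symm a).2
      have hd := hdom _ hmem2
      simp only [dif_pos hmem2] at hd
      have h5 : (⟨(E.symm a : Ordinal), hmem2⟩ : ↥(Iio c.ord)) = E.symm a := rfl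
      rw [h5, E.apply_symm_apply] at hd
      exact hd
  exact absurd (csInf_le' hmem : bNum θ ≤ c) hclt.not_ge

theorem stmt_11 (θ : Cardinal.{0}) (hθ : ℵ₀ ≤ θ) (hθreg : θ.IsRegular) :
    ∃ p : Ordinal.{0} → Ordinal.{0} → Ordinal.{0},
      (∀ η < (dNum θ).ord, ∀ β < θ.ord, p η β < θ.ord) ∧
      ∀ ℬ : Set (Set Ordinal.{0}), ℬ.Nonempty →
        (∀ B ∈ ℬ, B ⊆ Set.Iio θ.ord ∧ ∀ α < θ.ord, ∃ β ∈ B, α ≤ β) →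
        Cardinal.mk ↥ℬ < Cardinal.lift.{1,0} (bNum θ) →
        ∃ η < (dNum θ).ord, ∀ B ∈ ℬ, ∀ τ < θ.ord, ∃ β ∈ B, p η β = τ := by
  classical
  have hlim := Cardinal.isSuccLimit_ord hθ
  obtain ⟨F, hF1, hF2⟩ := exists_dominating θ hθ
  obtain ⟨v, hv1, hv2⟩ := exists_pair θ hθ
  refine ⟨fun η β => if h : η < (dNum θ).ord ∧ β < θ.ord then v (idx (F η) β) else 0, ?_, ?_⟩
  · intro η hη β hβ
    simp only [dif_pos (And.intro hη hβ)]
    exact hv1 _ (((idx_spec (F η) β).1.trans_lt hβ))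
  · intro ℬ hne hB hcard
    set G : ↥ℬ → Ordinal → Ordinal := fun B τ =>
      if h : τ < θ.ord then sInf {β | β ∈ (B : Set Ordinal) ∧ τ ≤ β} + 1 else 0 with hGdef
    have hGmem : ∀ (B : ↥ℬ), ∀ τ < θ.ord,
        sInf {β | β ∈ (B : Set Ordinal) ∧ τ ≤ β} ∈ {β | β ∈ (B : Set Ordinal) ∧ τ ≤ β} := by
      intro B τ hτ
      apply csInf_mem
      obtain ⟨β, hβB, hβ⟩ := (hB B B.2).2 τ hτ
      exact ⟨β, hβB, hβ⟩
    have hGinto : ∀ B, intoFun θ (G B) := by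
      intro B τ hτ
      simp only [hGdef, dif_pos hτ]
      rw [Ordinal.add_one_eq_succ]
      exact hlim.succ_lt ((hB B B.2).1 (hGmem B τ hτ).1)
    obtain ⟨g, hg, hgdom⟩ := exists_bound θ hθ G hGinto hcard
    obtain ⟨η, hη, hdom⟩ := hF2 g hg
    refine ⟨η, hη, ?_⟩
    intro B hBmem τ hτ
    obtain ⟨ε₁, hε₁θ, hε₁⟩ := hgdom ⟨B, hBmem⟩
    obtain ⟨ε₂, hε₂θ, hε₂⟩ := hdom
    have hεθ : max ε₁ ε₂ < θ.ord := max_lt hε₁θ hε₂θ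
    obtain ⟨γ, hγθ, hγε, hγv⟩ := hv2 τ hτ (max ε₁ ε₂) hεθ
    have hfinto := hF1 η hη
    set σ : Ordinal := climb (F η) γ with hσdef
    have hσθ : σ < θ.ord := climb_lt_ord hθreg hfinto γ hγθ
    have hσγ : γ ≤ σ := le_climb (F η) γ
    have h1 : G ⟨B, hBmem⟩ σ < g σ :=
      hε₁ σ (((le_max_left _ _).trans hγε).trans hσγ) hσθ
    have h2 : g σ < F η σ := hε₂ σ (((le_max_right _ _).trans hγε).trans hσγ) hσθ
    simp only [hGdef, dif_pos hσθ] at h1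
    set β₀ : Ordinal :=
      sInf {β | β ∈ ((⟨B, hBmem⟩ : ↥ℬ) : Set Ordinal) ∧ σ ≤ β} with hβ₀def
    have hβ₀mem : β₀ ∈ ((⟨B, hBmem⟩ : ↥ℬ) : Set Ordinal) ∧ σ ≤ β₀ := hGmem ⟨B, hBmem⟩ σ hσθ
    have hβ₀θ : β₀ < θ.ord := (hB B hBmem).1 hβ₀mem.1
    have hstep : β₀ < β₀ + 1 := by
      rw [Ordinal.add_one_eq_succ]; exact Order.lt_succ β₀
    have hβ₀lt : β₀ < F η σ := (hstep.trans h1).trans h2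
    have hlt2 : β₀ < climb (F η) (Order.succ γ) :=
      hβ₀lt.trans (apply_climb_lt_succ (F η) γ)
    refine ⟨β₀, hβ₀mem.1, ?_⟩
    simp only [dif_pos (And.intro hη hβ₀θ)]
    rw [idx_eq (F η) hβ₀mem.2 hlt2, hγv]
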